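/- (Corollary to Theorem 2.) Let Ω ⊆ ℝ³ be a bounded measurable set of finite positive Lebesgue measure vol(Ω) and diameter at most d > 0, and let B : ℝ³ → ℝ³ be an integrable vector field vanishing outside Ω whose fourth power of the norm is integrable on Ω. Let A be the Biot–Savart vector potential of B. Then vol(Ω) · ∫_Ω ‖B(x)‖⁴ dx ≥ d⁻² · ( ∫_Ω ⟨A(x), B(x)⟩ dx )². -/

import Mathlib

open MeasureTheory Metric Set
open scoped ENNReal

noncomputable section

local notation "E3" => EuclideanSpace ℝ (Fin 3)

/-- The cross product of two vectors in Euclidean 3-space. -/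
def cross3 (u v : EuclideanSpace ℝ (Fin 3)) : EuclideanSpace ℝ (Fin 3) :=
  (WithLp.equiv 2 (Fin 3 → ℝ)).symm
    ![u 1 * v 2 - u 2 * v 1, u 2 * v 0 - u 0 * v 2, u 0 * v 1 - u 1 * v 0]

/-- The Biot–Savart vector potential of a field `B` supported in `Ω`:
`A(x) = (1/(4π)) ∫_Ω B(y) × (x − y)/‖x − y‖³ dy`. -/
def biotSavart (Ω : Set (EuclideanSpace ℝ (Fin 3)))
    (B : EuclideanSpace ℝ (Fin 3) → EuclideanSpace ℝ (Fin 3))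
    (x : EuclideanSpace ℝ (Fin 3)) : EuclideanSpace ℝ (Fin 3) :=
  (1 / (4 * Real.pi)) • ∫ y in Ω, (‖x - y‖ ^ 3)⁻¹ • cross3 (B y) (x - y)

lemma norm_eq3 (w : EuclideanSpace ℝ (Fin 3)) :
    ‖w‖ = Real.sqrt (w 0 ^ 2 + w 1 ^ 2 + w 2 ^ 2) := by
  rw [EuclideanSpace.norm_eq, Fin.sum_univ_three]
  simp [Real.norm_eq_abs, sq_abs]

lemma cross3_norm_le (u v : EuclideanSpace ℝ (Fin 3)) : ‖cross3 u v‖ ≤ ‖u‖ * ‖v‖ := by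
  rw [norm_eq3, norm_eq3, norm_eq3, ← Real.sqrt_mul (by positivity)]
  apply Real.sqrt_le_sqrt
  have h0 : cross3 u v 0 = u 1 * v 2 - u 2 * v 1 := rfl
  have h1 : cross3 u v 1 = u 2 * v 0 - u 0 * v 2 := rfl
  have h2 : cross3 u v 2 = u 0 * v 1 - u 1 * v 0 := rfl
  rw [h0, h1, h2]
  nlinarith [sq_nonneg (u 0 * v 0 + u 1 * v 1 + u 2 * v 2)]

lemma kernel_norm_le (b z : EuclideanSpace ℝ (Fin 3)) :
    ‖(‖z‖ ^ 3)⁻¹ • cross3 b z‖ ≤ ‖b‖ * (‖z‖ ^ 2)⁻¹ := by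
  rcases eq_or_ne z 0 with rfl | hz
  · simp
  · have hz0 : (0:ℝ) < ‖z‖ := norm_pos_iff.mpr hz
    rw [norm_smul, Real.norm_eq_abs, abs_of_nonneg (by positivity)]
    calc (‖z‖ ^ 3)⁻¹ * ‖cross3 b z‖ ≤ (‖z‖ ^ 3)⁻¹ * (‖b‖ * ‖z‖) := by
          exact mul_le_mul_of_nonneg_left (cross3_norm_le b z) (by positivity)
      _ = ‖b‖ * (‖z‖ ^ 2)⁻¹ := by field_simp

lemma lintegral_closedBall_inv_sq (d : ℝ) :
    ∫⁻ z in Metric.closedBall (0 : E3) d, ENNReal.ofReal ((‖z‖ ^ 2)⁻¹) ∂volume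
      = ENNReal.ofReal (4 * Real.pi * d) := by
  set g : ℝ → ℝ≥0∞ := fun r => if r ≤ d then ENNReal.ofReal ((r ^ 2)⁻¹) else 0 with hgdef
  have hgm : Measurable g := by
    refine Measurable.ite measurableSet_Iic ?_ measurable_const
    exact ((measurable_id.pow_const 2).inv).ennreal_ofReal
  have hdim2 : Module.finrank ℝ E3 - 1 = 2 := by
    rw [finrank_euclideanSpace_fin]
  have h1 : ∫⁻ z in Metric.closedBall (0 : E3) d, ENNReal.ofReal ((‖z‖ ^ 2)⁻¹) ∂volume
      = ∫⁻ z : E3, g ‖z‖ ∂volume := by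
    rw [← lintegral_indicator measurableSet_closedBall]
    refine lintegral_congr fun z => ?_
    by_cases hz : ‖z‖ ≤ d
    · rw [Set.indicator_of_mem (by simpa [Metric.mem_closedBall, dist_zero_right] using hz)]
      simp [hgdef, hz]
    · rw [Set.indicator_of_notMem (by simpa [Metric.mem_closedBall, dist_zero_right] using hz)]
      simp [hgdef, hz]
  have h2 : ∫⁻ z : E3, g ‖z‖ ∂volume
      = ∫⁻ x : ({0}ᶜ : Set E3), g ‖x.1‖ ∂(volume.comap Subtype.val) := by
    rw [lintegral_subtype_comap (measurableSet_singleton (0:E3)).compl (fun z => g ‖z‖),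
      MeasureTheory.restrict_compl_singleton]
  have hφ := (volume : Measure E3).measurePreserving_homeomorphUnitSphereProd
  have hfm : Measurable fun p : sphere (0:E3) 1 × Ioi (0:ℝ) => g p.2.1 :=
    hgm.comp (measurable_subtype_coe.comp measurable_snd)
  have h3 : ∫⁻ x : ({0}ᶜ : Set E3), g ‖x.1‖ ∂(volume.comap Subtype.val)
      = ∫⁻ p : sphere (0:E3) 1 × Ioi (0:ℝ), g p.2.1
          ∂((volume : Measure E3).toSphere.prod (.volumeIoiPow (Module.finrank ℝ E3 - 1))) := by
    rw [← hφ.lintegral_comp hfm]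
    refine lintegral_congr fun x => ?_
    simp
  have h4 : ∫⁻ p : sphere (0:E3) 1 × Ioi (0:ℝ), g p.2.1
          ∂((volume : Measure E3).toSphere.prod (.volumeIoiPow (Module.finrank ℝ E3 - 1)))
      = (volume : Measure E3).toSphere univ
          * ∫⁻ r : Ioi (0:ℝ), g r.1 ∂(Measure.volumeIoiPow (Module.finrank ℝ E3 - 1)) := by
    rw [lintegral_prod _ (hfm.aemeasurable)]
    simp [lintegral_const, mul_comm]
  have h5 : (∫⁻ r : Ioi (0:ℝ), g r.1 ∂(Measure.volumeIoiPow (Module.finrank ℝ E3 - 1)))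
      = ∫⁻ r in Ioi (0:ℝ), ENNReal.ofReal (r ^ 2) * g r ∂volume := by
    rw [hdim2, Measure.volumeIoiPow,
      lintegral_withDensity_eq_lintegral_mul _
        ((measurable_subtype_coe.pow_const 2).ennreal_ofReal)
        (show Measurable fun r : ↥(Ioi (0:ℝ)) => g r.1 from hgm.comp measurable_subtype_coe)]
    exact lintegral_subtype_comap measurableSet_Ioi (fun r => ENNReal.ofReal (r ^ 2) * g r)
  have h6 : ∫⁻ r in Ioi (0:ℝ), ENNReal.ofReal (r ^ 2) * g r ∂volume = ENNReal.ofReal d := by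
    have hcongr : ∀ r ∈ Ioi (0:ℝ), ENNReal.ofReal (r ^ 2) * g r
        = (Ioc (0:ℝ) d).indicator (fun _ => (1:ℝ≥0∞)) r := by
      intro r hr
      have hr : 0 < r := hr
      by_cases hrd : r ≤ d
      · rw [Set.indicator_of_mem (Set.mem_Ioc.mpr ⟨hr, hrd⟩), hgdef]
        simp only [hrd, if_true]
        rw [← ENNReal.ofReal_mul (by positivity), mul_inv_cancel₀ (by positivity)]
        simp
      · rw [Set.indicator_of_notMem (fun h => hrd (Set.mem_Ioc.mp h).2), hgdef]
        simp [hrd]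
    rw [setLIntegral_congr_fun measurableSet_Ioi hcongr,
      lintegral_indicator measurableSet_Ioc, Measure.restrict_restrict measurableSet_Ioc,
      setLIntegral_one, inter_eq_left.2 Ioc_subset_Ioi_self, Real.volume_Ioc, sub_zero]
  have hγ : Real.Gamma ((3:ℝ)/2 + 1) = 3/4 * Real.sqrt Real.pi := by
    rw [Real.Gamma_add_one (by norm_num),
      show (3:ℝ)/2 = 1/2 + 1 by norm_num, Real.Gamma_add_one (by norm_num),
      Real.Gamma_one_half_eq]
    ring
  have hvol : volume (Metric.ball (0 : E3) 1) = ENNReal.ofReal (4/3 * Real.pi) := by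
    rw [EuclideanSpace.volume_ball]
    simp only [Fintype.card_fin]
    rw [show ((3:ℕ):ℝ)/2 + 1 = (3:ℝ)/2 + 1 by norm_num, hγ]
    have hs : Real.sqrt Real.pi ≠ 0 := by positivity
    have hval : Real.sqrt Real.pi ^ 3 / (3/4 * Real.sqrt Real.pi) = 4/3 * Real.pi := by
      rw [pow_succ, Real.sq_sqrt Real.pi_nonneg]
      field_simp
    rw [hval]
    simp
  have hsph : (volume : Measure E3).toSphere univ
      = (3:ℕ) * ENNReal.ofReal (4/3 * Real.pi) := by
    rw [Measure.toSphere_apply_univ, finrank_euclideanSpace_fin, hvol]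
  rw [h1, h2, h3, h4, h5, h6, hsph]
  rw [show ((3:ℕ) : ℝ≥0∞) = ENNReal.ofReal 3 by simp,
    ← ENNReal.ofReal_mul (by norm_num), ← ENNReal.ofReal_mul (by positivity)]
  congr 1
  ring


lemma omega_kernel_bound {Ω : Set E3} (hΩ : MeasurableSet Ω) (hΩb : Bornology.IsBounded Ω)
    {d : ℝ} (hd : Metric.diam Ω ≤ d) {t : E3} (ht : t ∈ Ω) :
    ∫⁻ z in Ω, ENNReal.ofReal ((‖t - z‖ ^ 2)⁻¹) ∂volume ≤ ENNReal.ofReal (4 * Real.pi * d) := by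
  have hsub : Ω ⊆ Metric.closedBall t d := fun z hz =>
    Metric.mem_closedBall.mpr ((Metric.dist_le_diam_of_mem hΩb hz ht).trans hd)
  calc ∫⁻ z in Ω, ENNReal.ofReal ((‖t - z‖ ^ 2)⁻¹) ∂volume
      ≤ ∫⁻ z in Metric.closedBall t d, ENNReal.ofReal ((‖t - z‖ ^ 2)⁻¹) ∂volume :=
        lintegral_mono_set hsub
    _ = ENNReal.ofReal (4 * Real.pi * d) := by
        have hpre : Metric.closedBall t d
            = (fun z : E3 => t - z) ⁻¹' Metric.closedBall (0 : E3) d := by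
          ext z
          simp only [Set.mem_preimage, Metric.mem_closedBall, dist_zero_right, dist_eq_norm,
            norm_sub_rev (z) (t), sub_zero]
        rw [hpre,
          (Measure.measurePreserving_sub_left volume t).setLIntegral_comp_preimage (f := fun z : E3 => ENNReal.ofReal ((‖z‖ ^ 2)⁻¹))
            measurableSet_closedBall
            (((measurable_norm.pow_const 2).inv).ennreal_ofReal),
          lintegral_closedBall_inv_sq d]

lemma biotSavart_ofReal_norm_le (Ω : Set E3) (B : E3 → E3) (x : E3) :
    ENNReal.ofReal ‖biotSavart Ω B x‖
      ≤ ENNReal.ofReal (1 / (4 * Real.pi))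
          * ∫⁻ y in Ω, ENNReal.ofReal (‖B y‖ * (‖x - y‖ ^ 2)⁻¹) ∂volume := by
  have hc : (0:ℝ) ≤ 1 / (4 * Real.pi) := by positivity
  rw [biotSavart, norm_smul, Real.norm_eq_abs, abs_of_nonneg hc, ENNReal.ofReal_mul hc]
  refine mul_le_mul_right ?_ _
  calc ENNReal.ofReal ‖∫ y in Ω, (‖x - y‖ ^ 3)⁻¹ • cross3 (B y) (x - y)‖
      ≤ ENNReal.ofReal
          ((∫⁻ y in Ω, ENNReal.ofReal ‖(‖x - y‖ ^ 3)⁻¹ • cross3 (B y) (x - y)‖ ∂volume).toReal) :=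
        ENNReal.ofReal_le_ofReal (norm_integral_le_lintegral_norm _)
    _ ≤ ∫⁻ y in Ω, ENNReal.ofReal ‖(‖x - y‖ ^ 3)⁻¹ • cross3 (B y) (x - y)‖ ∂volume :=
        ENNReal.ofReal_toReal_le
    _ ≤ ∫⁻ y in Ω, ENNReal.ofReal (‖B y‖ * (‖x - y‖ ^ 2)⁻¹) ∂volume :=
        lintegral_mono fun y => ENNReal.ofReal_le_ofReal (kernel_norm_le (B y) (x - y))

set_option maxHeartbeats 2000000 in
/-- Corollary to the generalized Arnold inequality:
`vol(Ω) · U⁽⁴⁾(B) ≥ d⁻² · χ_B²`. -/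
theorem generalized_arnold_corollary (Ω : Set (EuclideanSpace ℝ (Fin 3)))
    (hΩ : MeasurableSet Ω) (hΩb : Bornology.IsBounded Ω)
    (hΩfin : volume Ω ≠ ⊤) (hΩpos : 0 < volume Ω)
    (d : ℝ) (hd0 : 0 < d) (hd : Metric.diam Ω ≤ d)
    (B : EuclideanSpace ℝ (Fin 3) → EuclideanSpace ℝ (Fin 3))
    (hB : Integrable B) (hB0 : ∀ x ∉ Ω, B x = 0)
    (hB4 : IntegrableOn (fun x => ‖B x‖ ^ 4) Ω) :
    (volume Ω).toReal * ∫ x in Ω, ‖B x‖ ^ 4 ≥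
      (d ^ 2)⁻¹ * (∫ x in Ω, (inner ℝ (biotSavart Ω B x) (B x) : ℝ)) ^ 2 := by
  classical
  set A := biotSavart Ω B with hA
  set χ := ∫ x in Ω, (inner ℝ (A x) (B x) : ℝ) with hχdef
  set I2 := ∫ x in Ω, ‖B x‖ ^ 2 with hI2def
  set I4 := ∫ x in Ω, ‖B x‖ ^ 4 with hI4def
  set v := (volume Ω).toReal with hvdef
  have hv : 0 < v := ENNReal.toReal_pos hΩpos.ne' hΩfin
  -- measurable representative of ‖B ·‖
  have hNm0 := hB.1.norm.aemeasurable
  obtain ⟨N0, hN0m, hN0e⟩ := hNm0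
  set N : E3 → ℝ := fun x => |N0 x| with hNdef
  have hNm : Measurable N := hN0m.abs
  have hNnn : ∀ x, 0 ≤ N x := fun x => abs_nonneg _
  have hNe : (fun x => ‖B x‖) =ᵐ[volume] N := by
    filter_upwards [hN0e] with x hx
    show ‖B x‖ = |N0 x|
    rw [← hx, abs_of_nonneg (norm_nonneg _)]
  have hNeΩ : (fun x => ‖B x‖) =ᵐ[volume.restrict Ω] N := ae_restrict_of_ae hNe
  -- integrability of ‖B‖^2 on Ω
  have hI2int : IntegrableOn (fun x => ‖B x‖ ^ 2) Ω := by
    have hcon : IntegrableOn (fun _ : E3 => (1:ℝ)) Ω :=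
      integrableOn_const hΩfin
    have hsum : IntegrableOn (fun x => 1 + ‖B x‖ ^ 4) Ω := hcon.add hB4
    refine Integrable.mono hsum ((hB.1.norm.aemeasurable.pow_const 2).aestronglyMeasurable).restrict ?_
    · filter_upwards with x
      rw [Real.norm_eq_abs, Real.norm_eq_abs, abs_of_nonneg (by positivity),
        abs_of_nonneg (by positivity)]
      nlinarith [sq_nonneg (‖B x‖ ^ 2 - 1), norm_nonneg (B x)]
  have hI2nn : 0 ≤ I2 := setIntegral_nonneg hΩ fun x _ => by positivity
  have hI4nn : 0 ≤ I4 := setIntegral_nonneg hΩ fun x _ => by positivity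
  -- Step A : |χ| ≤ d * I2
  have hπ : (0:ℝ) < Real.pi := Real.pi_pos
  have stepA : |χ| ≤ d * I2 := by
    -- the double integral with measurable representative
    set W : E3 → E3 → ℝ≥0∞ := fun x y => ENNReal.ofReal ((‖x - y‖ ^ 2)⁻¹) with hWdef
    have hWm : Measurable fun p : E3 × E3 => W p.1 p.2 :=
      (((measurable_fst.sub measurable_snd).norm.pow_const 2).inv).ennreal_ofReal
    set c : ℝ≥0∞ := ENNReal.ofReal (1 / (4 * Real.pi)) with hcdef
    set K : E3 → ℝ≥0∞ := fun x => ∫⁻ y in Ω, ENNReal.ofReal (‖B y‖ * (‖x - y‖ ^ 2)⁻¹) ∂volume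
      with hKdef
    have h1 : ENNReal.ofReal |χ|
        ≤ ∫⁻ x in Ω, ENNReal.ofReal ‖(inner ℝ (A x) (B x) : ℝ)‖ ∂volume := by
      calc ENNReal.ofReal |χ|
          ≤ ENNReal.ofReal
            ((∫⁻ x in Ω, ENNReal.ofReal ‖(inner ℝ (A x) (B x) : ℝ)‖ ∂volume).toReal) := by
            apply ENNReal.ofReal_le_ofReal
            rw [← Real.norm_eq_abs]
            exact norm_integral_le_lintegral_norm _
        _ ≤ _ := ENNReal.ofReal_toReal_le
    have h2 : ∫⁻ x in Ω, ENNReal.ofReal ‖(inner ℝ (A x) (B x) : ℝ)‖ ∂volume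
        ≤ ∫⁻ x in Ω, (c * K x) * ENNReal.ofReal ‖B x‖ ∂volume := by
      refine lintegral_mono fun x => ?_
      calc ENNReal.ofReal ‖(inner ℝ (A x) (B x) : ℝ)‖
          ≤ ENNReal.ofReal (‖A x‖ * ‖B x‖) :=
            ENNReal.ofReal_le_ofReal (norm_inner_le_norm _ _)
        _ = ENNReal.ofReal ‖A x‖ * ENNReal.ofReal ‖B x‖ :=
            ENNReal.ofReal_mul (norm_nonneg _)
        _ ≤ (c * K x) * ENNReal.ofReal ‖B x‖ :=
            mul_le_mul_left (biotSavart_ofReal_norm_le Ω B x) _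
    -- rewrite as double integral
    have h3 : ∫⁻ x in Ω, (c * K x) * ENNReal.ofReal ‖B x‖ ∂volume
        = c * ∫⁻ x in Ω, K x * ENNReal.ofReal ‖B x‖ ∂volume := by
      rw [← lintegral_const_mul' c _ ENNReal.ofReal_ne_top]
      congr 1
      funext x
      ring
    set D : ℝ≥0∞ :=
      ∫⁻ x in Ω, ∫⁻ y in Ω, ENNReal.ofReal (N y * N x * (‖x - y‖ ^ 2)⁻¹) ∂volume ∂volume
      with hDdef
    have h4 : ∫⁻ x in Ω, K x * ENNReal.ofReal ‖B x‖ ∂volume = D := by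
      have hx1 : ∀ x : E3, K x * ENNReal.ofReal ‖B x‖
          = ∫⁻ y in Ω, ENNReal.ofReal (N y * ‖B x‖ * (‖x - y‖ ^ 2)⁻¹) ∂volume := by
        intro x
        rw [hKdef]
        rw [← lintegral_mul_const' _ _ ENNReal.ofReal_ne_top]
        refine lintegral_congr_ae ?_
        filter_upwards [hNeΩ] with y hy
        rw [← ENNReal.ofReal_mul (by positivity), ← hy]
        congr 1
        ring
      rw [hDdef]
      refine Eq.trans (lintegral_congr hx1) (lintegral_congr_ae ?_)
      filter_upwards [hNeΩ] with x hx
      refine lintegral_congr fun y => ?_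
      rw [← hx]
    -- symmetrize
    set q1 : E3 → E3 → ℝ≥0∞ := fun x y => ENNReal.ofReal (N y ^ 2 * (‖x - y‖ ^ 2)⁻¹ / 2)
      with hq1def
    set q2 : E3 → E3 → ℝ≥0∞ := fun x y => ENNReal.ofReal (N x ^ 2 * (‖x - y‖ ^ 2)⁻¹ / 2)
      with hq2def
    have hq1m : Measurable fun p : E3 × E3 => q1 p.1 p.2 := by
      apply Measurable.ennreal_ofReal
      exact (((hNm.comp measurable_snd).pow_const 2).mul
        (((measurable_fst.sub measurable_snd).norm.pow_const 2).inv)).div_const 2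
    have hq2m : Measurable fun p : E3 × E3 => q2 p.1 p.2 := by
      apply Measurable.ennreal_ofReal
      exact (((hNm.comp measurable_fst).pow_const 2).mul
        (((measurable_fst.sub measurable_snd).norm.pow_const 2).inv)).div_const 2
    have h5 : D ≤ (∫⁻ x in Ω, ∫⁻ y in Ω, q1 x y ∂volume ∂volume)
        + ∫⁻ x in Ω, ∫⁻ y in Ω, q2 x y ∂volume ∂volume := by
      have hpt : ∀ x y : E3, ENNReal.ofReal (N y * N x * (‖x - y‖ ^ 2)⁻¹)
          ≤ q1 x y + q2 x y := by
        intro x y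
        rw [hq1def, hq2def, ← ENNReal.ofReal_add (by positivity) (by positivity)]
        apply ENNReal.ofReal_le_ofReal
        have hw : (0:ℝ) ≤ (‖x - y‖ ^ 2)⁻¹ := by positivity
        nlinarith [sq_nonneg (N y - N x), hNnn x, hNnn y,
          mul_le_mul_of_nonneg_right (sq_nonneg (N y - N x)) hw]
      calc D ≤ ∫⁻ x in Ω, ∫⁻ y in Ω, (q1 x y + q2 x y) ∂volume ∂volume :=
            lintegral_mono fun x => lintegral_mono fun y => hpt x y
        _ = (∫⁻ x in Ω, ∫⁻ y in Ω, q1 x y ∂volume ∂volume)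
            + ∫⁻ x in Ω, ∫⁻ y in Ω, q2 x y ∂volume ∂volume := by
            rw [← lintegral_add_left]
            · refine lintegral_congr fun x => ?_
              rw [lintegral_add_left]
              exact hq1m.comp (measurable_prodMk_left)
            · exact Measurable.lintegral_prod_right (f := q1) hq1m
    -- bound each half
    have hQ : ∫⁻ y in Ω, ENNReal.ofReal (N y ^ 2 / 2) ∂volume = ENNReal.ofReal (I2 / 2) := by
      have hint : IntegrableOn (fun x => ‖B x‖ ^ 2 / 2) Ω := hI2int.div_const 2
      rw [hI2def, ← integral_div]
      rw [ofReal_integral_eq_lintegral_ofReal hint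
        (ae_restrict_of_ae (ae_of_all _ fun x => by positivity))]
      refine lintegral_congr_ae ?_
      filter_upwards [hNeΩ] with y hy
      rw [← hy]
    have hhalf1 : ∫⁻ x in Ω, ∫⁻ y in Ω, q1 x y ∂volume ∂volume
        ≤ ENNReal.ofReal (4 * Real.pi * d) * ENNReal.ofReal (I2 / 2) := by
      rw [lintegral_lintegral_swap (hq1m.aemeasurable)]
      have hinner : ∀ y ∈ Ω, ∫⁻ x in Ω, q1 x y ∂volume
          ≤ ENNReal.ofReal (N y ^ 2 / 2) * ENNReal.ofReal (4 * Real.pi * d) := by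
        intro y hy
        have : ∀ x : E3, q1 x y
            = ENNReal.ofReal (N y ^ 2 / 2) * ENNReal.ofReal ((‖y - x‖ ^ 2)⁻¹) := by
          intro x
          rw [hq1def, ← ENNReal.ofReal_mul (by positivity), norm_sub_rev]
          congr 1
          ring
        calc ∫⁻ x in Ω, q1 x y ∂volume
            = ENNReal.ofReal (N y ^ 2 / 2)
              * ∫⁻ x in Ω, ENNReal.ofReal ((‖y - x‖ ^ 2)⁻¹) ∂volume := by
              rw [← lintegral_const_mul' _ _ ENNReal.ofReal_ne_top]
              exact lintegral_congr fun x => this x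
          _ ≤ ENNReal.ofReal (N y ^ 2 / 2) * ENNReal.ofReal (4 * Real.pi * d) :=
              mul_le_mul_right (omega_kernel_bound hΩ hΩb hd hy) _
      calc ∫⁻ y in Ω, ∫⁻ x in Ω, q1 x y ∂volume ∂volume
          ≤ ∫⁻ y in Ω, ENNReal.ofReal (N y ^ 2 / 2) * ENNReal.ofReal (4 * Real.pi * d)
              ∂volume := by
            refine lintegral_mono_ae ?_
            filter_upwards [ae_restrict_mem hΩ] with y hy
            exact hinner y hy
        _ = ENNReal.ofReal (4 * Real.pi * d) * ENNReal.ofReal (I2 / 2) := by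
            rw [lintegral_mul_const' _ _ ENNReal.ofReal_ne_top, hQ, mul_comm]
    have hhalf2 : ∫⁻ x in Ω, ∫⁻ y in Ω, q2 x y ∂volume ∂volume
        ≤ ENNReal.ofReal (4 * Real.pi * d) * ENNReal.ofReal (I2 / 2) := by
      have hinner : ∀ x ∈ Ω, ∫⁻ y in Ω, q2 x y ∂volume
          ≤ ENNReal.ofReal (N x ^ 2 / 2) * ENNReal.ofReal (4 * Real.pi * d) := by
        intro x hx
        have : ∀ y : E3, q2 x y
            = ENNReal.ofReal (N x ^ 2 / 2) * ENNReal.ofReal ((‖x - y‖ ^ 2)⁻¹) := by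
          intro y
          rw [hq2def, ← ENNReal.ofReal_mul (by positivity)]
          congr 1
          ring
        calc ∫⁻ y in Ω, q2 x y ∂volume
            = ENNReal.ofReal (N x ^ 2 / 2)
              * ∫⁻ y in Ω, ENNReal.ofReal ((‖x - y‖ ^ 2)⁻¹) ∂volume := by
              rw [← lintegral_const_mul' _ _ ENNReal.ofReal_ne_top]
              exact lintegral_congr fun y => this y
          _ ≤ ENNReal.ofReal (N x ^ 2 / 2) * ENNReal.ofReal (4 * Real.pi * d) :=
              mul_le_mul_right (omega_kernel_bound hΩ hΩb hd hx) _
      calc ∫⁻ x in Ω, ∫⁻ y in Ω, q2 x y ∂volume ∂volume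
          ≤ ∫⁻ x in Ω, ENNReal.ofReal (N x ^ 2 / 2) * ENNReal.ofReal (4 * Real.pi * d)
              ∂volume := by
            refine lintegral_mono_ae ?_
            filter_upwards [ae_restrict_mem hΩ] with x hx
            exact hinner x hx
        _ = ENNReal.ofReal (4 * Real.pi * d) * ENNReal.ofReal (I2 / 2) := by
            rw [lintegral_mul_const' _ _ ENNReal.ofReal_ne_top, hQ, mul_comm]
    -- combine
    have hfinal : ENNReal.ofReal |χ| ≤ ENNReal.ofReal (d * I2) := by
      calc ENNReal.ofReal |χ| ≤ c * D := by
            refine h1.trans (h2.trans ?_)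
            rw [h3, h4]
        _ ≤ c * (ENNReal.ofReal (4 * Real.pi * d) * ENNReal.ofReal (I2 / 2)
              + ENNReal.ofReal (4 * Real.pi * d) * ENNReal.ofReal (I2 / 2)) :=
            mul_le_mul_right (h5.trans (add_le_add hhalf1 hhalf2)) _
        _ = ENNReal.ofReal (d * I2) := by
            rw [hcdef, ← ENNReal.ofReal_mul (by positivity),
              ← ENNReal.ofReal_add (by positivity) (by positivity),
              ← ENNReal.ofReal_mul (by positivity)]
            congr 1
            field_simp
            ring
    have := (ENNReal.ofReal_le_ofReal_iff (by positivity)).mp hfinal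
    exact this
  -- Step B : I2 ^ 2 ≤ v * I4
  have stepB : I2 ^ 2 ≤ v * I4 := by
    set cc := I2 / v with hccdef
    have hmeas2 : AEStronglyMeasurable (fun x => ‖B x‖ ^ 2) (volume.restrict Ω) :=
      hI2int.aestronglyMeasurable
    have hint : IntegrableOn (fun x => (‖B x‖ ^ 2 - cc) ^ 2) Ω := by
      have : IntegrableOn (fun x => ‖B x‖ ^ 4 - (2 * cc) * ‖B x‖ ^ 2 + cc ^ 2) Ω :=
        (hB4.sub (hI2int.const_mul (2 * cc))).add (integrableOn_const hΩfin)
      refine this.congr ?_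
      filter_upwards with x
      ring
    have hnn : 0 ≤ ∫ x in Ω, (‖B x‖ ^ 2 - cc) ^ 2 :=
      setIntegral_nonneg hΩ fun x _ => sq_nonneg _
    have hexp : ∫ x in Ω, (‖B x‖ ^ 2 - cc) ^ 2
        = I4 - 2 * cc * I2 + cc ^ 2 * v := by
      have : ∫ x in Ω, (‖B x‖ ^ 2 - cc) ^ 2
          = ∫ x in Ω, (‖B x‖ ^ 4 - (2 * cc) * ‖B x‖ ^ 2 + cc ^ 2) := by
        refine integral_congr_ae ?_
        filter_upwards with x
        ring
      have e1 : ∫ x in Ω, (‖B x‖ ^ 4 - 2 * cc * ‖B x‖ ^ 2 + cc ^ 2)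
          = (∫ x in Ω, (‖B x‖ ^ 4 - 2 * cc * ‖B x‖ ^ 2)) + ∫ _x in Ω, (cc ^ 2 : ℝ) :=
        integral_add (hB4.sub (hI2int.const_mul (2 * cc)))
          (integrableOn_const hΩfin)
      have e2 : ∫ x in Ω, (‖B x‖ ^ 4 - 2 * cc * ‖B x‖ ^ 2)
          = I4 - ∫ x in Ω, 2 * cc * ‖B x‖ ^ 2 :=
        integral_sub hB4 (hI2int.const_mul (2 * cc))
      have e3 : ∫ x in Ω, 2 * cc * ‖B x‖ ^ 2 = 2 * cc * I2 := integral_const_mul _ _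
      have e4 : ∫ _x in Ω, (cc ^ 2 : ℝ) = v * cc ^ 2 := by
        rw [setIntegral_const, smul_eq_mul]
        rfl
      rw [this]
      have hcongr : ∫ x in Ω, (‖B x‖ ^ 4 - (2 * cc) * ‖B x‖ ^ 2 + cc ^ 2)
          = ∫ x in Ω, (‖B x‖ ^ 4 - 2 * cc * ‖B x‖ ^ 2 + cc ^ 2) := rfl
      rw [hcongr, e1, e2, e3, e4]
      ring
    rw [hexp] at hnn
    have hv' : v ≠ 0 := hv.ne'
    have heq : I4 - 2 * cc * I2 + cc ^ 2 * v = I4 - I2 ^ 2 / v := by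
      rw [hccdef]
      field_simp
      ring
    rw [heq] at hnn
    have h2 : I2 ^ 2 / v ≤ I4 := by linarith
    calc I2 ^ 2 = I2 ^ 2 / v * v := by field_simp
      _ ≤ I4 * v := mul_le_mul_of_nonneg_right h2 hv.le
      _ = v * I4 := mul_comm _ _
  -- conclusion
  have h1 : χ ^ 2 ≤ (d * I2) ^ 2 := by
    rw [← sq_abs χ]
    exact pow_le_pow_left₀ (abs_nonneg _) stepA 2
  have h2 : (d * I2) ^ 2 ≤ d ^ 2 * (v * I4) := by
    have := mul_le_mul_of_nonneg_left stepB (le_of_lt (by positivity : (0:ℝ) < d ^ 2))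
    nlinarith [this]
  rw [ge_iff_le]
  calc (d ^ 2)⁻¹ * χ ^ 2 ≤ (d ^ 2)⁻¹ * (d ^ 2 * (v * I4)) := by
        exact mul_le_mul_of_nonneg_left (h1.trans h2) (by positivity)
    _ = v * I4 := by
        field_simp
  
end
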